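/- Let E be a complex Banach space and let 1 ≤ p ≤ q < ∞. Then the family of weak (p,q)-multi-norms (‖·‖_n^{(p,q)} : n ∈ ℕ) is a multi-norm over E; that is, each ‖·‖_n^{(p,q)} is a norm on E^n, ‖·‖_1^{(p,q)} coincides with the norm of E, and for all n ≥ 2 and x_1,…,x_n ∈ E: (A1) ‖(x_{σ(1)},…,x_{σ(n)})‖_n^{(p,q)} = ‖(x_1,…,x_n)‖_n^{(p,q)} for every permutation σ; (A2) ‖(α_1 x_1,…,α_n x_n)‖_n^{(p,q)} ≤ (max_i |α_i|)·‖(x_1,…,x_n)‖_n^{(p,q)} for α_i ∈ ℂ; (A3) ‖(x_1,…,x_{n-1},0)‖_n^{(p,q)} = ‖(x_1,…,x_{n-1})‖_{n-1}^{(p,q)}; (A4) ‖(x_1,…,x_{n-2},x_{n-1},x_{n-1})‖_n^{(p,q)} = ‖(x_1,…,x_{n-2},x_{n-1})‖_{n-1}^{(p,q)}. -/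

import Mathlib

open MeasureTheory NormedSpace Set
open scoped ENNReal NNReal

/-- The weak `p`-summing norm of an `n`-tuple in a normed space `F`:
`μ_{p,n}(y) = sup { (∑ |λ(y_i)|^p)^{1/p} : λ ∈ F', ‖λ‖ ≤ 1 }`. -/
noncomputable def muP {F : Type*} [NormedAddCommGroup F] [NormedSpace ℂ F]
    (p : ℝ) {n : ℕ} (y : Fin n → F) : ℝ :=
  sSup { r : ℝ | ∃ l : StrongDual ℂ F, ‖l‖ ≤ 1 ∧ r = (∑ i, ‖l (y i)‖ ^ p) ^ (1 / p) }

/-- The weak `(p,q)`-multi-norm of an `n`-tuple in `E`: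
`‖x‖_n^{(p,q)} = sup { (∑ |λ_i(x_i)|^q)^{1/q} : λ ∈ (E')^n, μ_{p,n}(λ) ≤ 1 }`,
where `μ_{p,n}(λ)` is the weak `p`-summing norm computed in the dual space `E'`. -/
noncomputable def weakNorm {E : Type*} [NormedAddCommGroup E] [NormedSpace ℂ E]
    (p q : ℝ) {n : ℕ} (x : Fin n → E) : ℝ :=
  sSup { r : ℝ | ∃ l : Fin n → StrongDual ℂ E, muP p l ≤ 1 ∧
    r = (∑ i, ‖(l i) (x i)‖ ^ q) ^ (1 / q) }

namespace WeakAux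

variable {p q : ℝ}

lemma rpow_od_rpow {x : ℝ} (hx : 0 ≤ x) (hp : p ≠ 0) : (x ^ p) ^ (1/p) = x := by
  rw [one_div, Real.rpow_rpow_inv hx hp]

lemma rpow_rpow_od {x : ℝ} (hx : 0 ≤ x) (hp : p ≠ 0) : (x ^ (1/p)) ^ p = x := by
  rw [one_div, Real.rpow_inv_rpow hx hp]

section F
variable {F : Type*} [NormedAddCommGroup F] [NormedSpace ℂ F] {n : ℕ}

lemma muP_mem_zero (hp : 1 ≤ p) (y : Fin n → F) :
    (0:ℝ) ∈ {r : ℝ | ∃ l : StrongDual ℂ F, ‖l‖ ≤ 1 ∧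
      r = (∑ i, ‖l (y i)‖ ^ p) ^ (1 / p)} := by
  have hp0 : p ≠ 0 := by linarith
  exact ⟨0, by simp, by simp [Real.zero_rpow hp0, Real.zero_rpow (inv_ne_zero hp0)]⟩

lemma muP_bdd (hp : 1 ≤ p) (y : Fin n → F) :
    BddAbove {r : ℝ | ∃ l : StrongDual ℂ F, ‖l‖ ≤ 1 ∧
      r = (∑ i, ‖l (y i)‖ ^ p) ^ (1 / p)} := by
  refine ⟨(∑ i, ‖y i‖ ^ p) ^ (1/p), ?_⟩
  rintro r ⟨l, hl, rfl⟩
  have h0 : (0:ℝ) ≤ p := by linarith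
  refine Real.rpow_le_rpow (by positivity) (Finset.sum_le_sum fun i _ => ?_) (by positivity)
  exact Real.rpow_le_rpow (norm_nonneg _)
    ((l.le_opNorm _).trans (mul_le_of_le_one_left (norm_nonneg _) hl)) h0

lemma muP_nonneg (hp : 1 ≤ p) (y : Fin n → F) : 0 ≤ muP p y :=
  le_csSup (muP_bdd hp y) (muP_mem_zero hp y)

lemma le_muP (hp : 1 ≤ p) (y : Fin n → F) (L : StrongDual ℂ F) (hL : ‖L‖ ≤ 1) :
    (∑ i, ‖L (y i)‖ ^ p) ^ (1/p) ≤ muP p y :=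
  le_csSup (muP_bdd hp y) ⟨L, hL, rfl⟩

lemma muP_le (hp : 1 ≤ p) (y : Fin n → F) {C : ℝ}
    (h : ∀ L : StrongDual ℂ F, ‖L‖ ≤ 1 → (∑ i, ‖L (y i)‖ ^ p) ^ (1/p) ≤ C) :
    muP p y ≤ C := by
  refine csSup_le ⟨0, muP_mem_zero hp y⟩ ?_
  rintro r ⟨L, hL, rfl⟩
  exact h L hL

lemma norm_le_muP (hp : 1 ≤ p) (y : Fin n → F) (j : Fin n) : ‖y j‖ ≤ muP p y := by
  obtain ⟨L, hL1, hLy⟩ := exists_dual_vector'' ℂ (y j)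
  have h1 : ‖y j‖ = (‖L (y j)‖ ^ p) ^ (1/p) := by
    rw [hLy, RCLike.norm_ofReal, abs_of_nonneg (norm_nonneg _),
      rpow_od_rpow (norm_nonneg _) (by linarith)]
  rw [h1]
  refine le_trans (Real.rpow_le_rpow (by positivity) ?_ (by positivity)) (le_muP hp y L hL1)
  exact Finset.single_le_sum (f := fun i => ‖L (y i)‖ ^ p) (fun i _ => by positivity)
    (Finset.mem_univ j)

end F

section E
variable {E : Type*} [NormedAddCommGroup E] [NormedSpace ℂ E] {n : ℕ}

lemma weak_mem_zero (hp : 1 ≤ p) (hq : 1 ≤ q) (x : Fin n → E) :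
    (0:ℝ) ∈ {r : ℝ | ∃ l : Fin n → StrongDual ℂ E, muP p l ≤ 1 ∧
      r = (∑ i, ‖(l i) (x i)‖ ^ q) ^ (1 / q)} := by
  have hq0 : q ≠ 0 := by linarith
  have hp0 : p ≠ 0 := by linarith
  refine ⟨0, ?_, by simp [Real.zero_rpow hq0, Real.zero_rpow (inv_ne_zero hq0)]⟩
  refine le_trans (muP_le hp _ (C := 0) fun L hL => ?_) zero_le_one
  simp [Real.zero_rpow hp0, Real.zero_rpow (inv_ne_zero hp0)]

lemma weak_bdd (hp : 1 ≤ p) (hq : 1 ≤ q) (x : Fin n → E) :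
    BddAbove {r : ℝ | ∃ l : Fin n → StrongDual ℂ E, muP p l ≤ 1 ∧
      r = (∑ i, ‖(l i) (x i)‖ ^ q) ^ (1 / q)} := by
  refine ⟨(∑ i, ‖x i‖ ^ q) ^ (1/q), ?_⟩
  rintro r ⟨l, hl, rfl⟩
  have h0 : (0:ℝ) ≤ q := by linarith
  refine Real.rpow_le_rpow (by positivity) (Finset.sum_le_sum fun i _ => ?_) (by positivity)
  refine Real.rpow_le_rpow (norm_nonneg _) (((l i).le_opNorm _).trans ?_) h0
  exact mul_le_of_le_one_left (norm_nonneg _) ((norm_le_muP hp l i).trans hl)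

lemma weakNorm_nonneg (hp : 1 ≤ p) (hq : 1 ≤ q) (x : Fin n → E) : 0 ≤ weakNorm p q x :=
  le_csSup (weak_bdd hp hq x) (weak_mem_zero hp hq x)

lemma le_weakNorm (hp : 1 ≤ p) (hq : 1 ≤ q) (x : Fin n → E)
    (l : Fin n → StrongDual ℂ E) (hl : muP p l ≤ 1) :
    (∑ i, ‖(l i) (x i)‖ ^ q) ^ (1/q) ≤ weakNorm p q x :=
  le_csSup (weak_bdd hp hq x) ⟨l, hl, rfl⟩

lemma weakNorm_le (hp : 1 ≤ p) (hq : 1 ≤ q) (x : Fin n → E) {C : ℝ}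
    (h : ∀ l : Fin n → StrongDual ℂ E, muP p l ≤ 1 →
      (∑ i, ‖(l i) (x i)‖ ^ q) ^ (1/q) ≤ C) :
    weakNorm p q x ≤ C := by
  refine csSup_le ⟨0, weak_mem_zero hp hq x⟩ ?_
  rintro r ⟨l, hl, rfl⟩
  exact h l hl

lemma weakNorm_zero (hp : 1 ≤ p) (hq : 1 ≤ q) :
    weakNorm p q (0 : Fin n → E) = 0 := by
  have hq0 : q ≠ 0 := by linarith
  refine le_antisymm (weakNorm_le hp hq _ fun l hl => ?_) (weakNorm_nonneg hp hq 0)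
  simp [Real.zero_rpow hq0, Real.zero_rpow (inv_ne_zero hq0)]

lemma weakNorm_eq_zero_iff (hp : 1 ≤ p) (hq : 1 ≤ q) (x : Fin n → E) :
    weakNorm p q x = 0 ↔ x = 0 := by
  constructor
  · intro h
    by_contra hx
    obtain ⟨j, hj⟩ := Function.ne_iff.mp hx
    obtain ⟨g, hg1, hgx⟩ := exists_dual_vector'' ℂ (x j)
    have hp0 : p ≠ 0 := by linarith
    have hq0 : q ≠ 0 := by linarith
    have hmu : muP p (Pi.single j g : Fin n → StrongDual ℂ E) ≤ 1 := by
      refine muP_le hp _ fun L hL => ?_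
      rw [Fintype.sum_eq_single j (fun i hi => by
          simp [Pi.single_eq_of_ne hi, Real.zero_rpow hp0]),
        Pi.single_eq_same, rpow_od_rpow (norm_nonneg _) hp0]
      exact (L.le_opNorm g).trans (by
        calc ‖L‖ * ‖g‖ ≤ 1 * 1 := mul_le_mul hL hg1 (norm_nonneg _) zero_le_one
        _ = 1 := one_mul 1)
    have hval : (∑ i, ‖((Pi.single j g : Fin n → StrongDual ℂ E) i) (x i)‖ ^ q) ^ (1/q)
        = ‖x j‖ := by
      have hsum : ∑ i, ‖((Pi.single j g : Fin n → StrongDual ℂ E) i) (x i)‖ ^ q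
          = ‖x j‖ ^ q := by
        rw [Fintype.sum_eq_single j fun i hi => by
          simp [Pi.single_eq_of_ne hi, Real.zero_rpow hq0]]
        rw [Pi.single_eq_same, hgx, RCLike.norm_ofReal, abs_of_nonneg (norm_nonneg _)]
      rw [hsum, rpow_od_rpow (norm_nonneg _) hq0]
    have := le_weakNorm hp hq x _ hmu
    rw [hval, h] at this
    exact hj (norm_le_zero_iff.mp this)
  · rintro rfl
    exact weakNorm_zero hp hq

lemma weakNorm_add_le (hp : 1 ≤ p) (hq : 1 ≤ q) (x y : Fin n → E) :
    weakNorm p q (x + y) ≤ weakNorm p q x + weakNorm p q y := by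
  refine weakNorm_le hp hq _ fun l hl => ?_
  have h1 : (∑ i, ‖(l i) ((x + y) i)‖ ^ q) ^ (1/q)
      ≤ (∑ i, (‖(l i) (x i)‖ + ‖(l i) (y i)‖) ^ q) ^ (1/q) := by
    refine Real.rpow_le_rpow (by positivity) (Finset.sum_le_sum fun i _ => ?_) (by positivity)
    refine Real.rpow_le_rpow (norm_nonneg _) ?_ (by linarith)
    simpa [map_add] using norm_add_le ((l i) (x i)) ((l i) (y i))
  refine h1.trans ?_
  refine le_trans (Real.Lp_add_le_of_nonneg (s := Finset.univ)
    (f := fun i => ‖(l i) (x i)‖) (g := fun i => ‖(l i) (y i)‖) hq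
    (fun i _ => norm_nonneg _) (fun i _ => norm_nonneg _)) ?_
  exact add_le_add (le_weakNorm hp hq x l hl) (le_weakNorm hp hq y l hl)

lemma weakNorm_smul_le (hp : 1 ≤ p) (hq : 1 ≤ q) (c : ℂ) (x : Fin n → E) :
    weakNorm p q (c • x) ≤ ‖c‖ * weakNorm p q x := by
  have hq0 : q ≠ 0 := by linarith
  refine weakNorm_le hp hq _ fun l hl => ?_
  have h1 : ∀ i, ‖(l i) ((c • x) i)‖ ^ q = ‖c‖ ^ q * ‖(l i) (x i)‖ ^ q := by
    intro i
    rw [Pi.smul_apply, _root_.map_smul, smul_eq_mul, norm_mul,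
      Real.mul_rpow (norm_nonneg _) (norm_nonneg _)]
  rw [Finset.sum_congr rfl fun i _ => h1 i, ← Finset.mul_sum,
    Real.mul_rpow (by positivity) (by positivity), rpow_od_rpow (norm_nonneg _) hq0]
  exact mul_le_mul_of_nonneg_left (le_weakNorm hp hq x l hl) (norm_nonneg _)

lemma weakNorm_smul (hp : 1 ≤ p) (hq : 1 ≤ q) (c : ℂ) (x : Fin n → E) :
    weakNorm p q (c • x) = ‖c‖ * weakNorm p q x := by
  rcases eq_or_ne c 0 with rfl | hc
  · simp [weakNorm_zero hp hq]
  refine le_antisymm (weakNorm_smul_le hp hq c x) ?_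
  have h2 := weakNorm_smul_le hp hq c⁻¹ (c • x)
  rw [smul_smul, inv_mul_cancel₀ hc, one_smul, norm_inv] at h2
  calc ‖c‖ * weakNorm p q x ≤ ‖c‖ * (‖c‖⁻¹ * weakNorm p q (c • x)) :=
        mul_le_mul_of_nonneg_left h2 (norm_nonneg _)
    _ = weakNorm p q (c • x) := by
        rw [← mul_assoc, mul_inv_cancel₀ (norm_ne_zero_iff.mpr hc), one_mul]

lemma weakNorm_one (hp : 1 ≤ p) (hq : 1 ≤ q) (x : E) :
    weakNorm p q (fun _ : Fin 1 => x) = ‖x‖ := by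
  have hp0 : p ≠ 0 := by linarith
  have hq0 : q ≠ 0 := by linarith
  refine le_antisymm (weakNorm_le hp hq _ fun l hl => ?_) ?_
  · rw [Fin.sum_univ_one, rpow_od_rpow (norm_nonneg _) hq0]
    refine ((l 0).le_opNorm x).trans ?_
    exact mul_le_of_le_one_left (norm_nonneg _) ((norm_le_muP hp l 0).trans hl)
  · obtain ⟨g, hg1, hgx⟩ := exists_dual_vector'' ℂ x
    have hmu : muP p (fun _ : Fin 1 => g) ≤ 1 := by
      refine muP_le hp _ fun L hL => ?_
      rw [Fin.sum_univ_one, rpow_od_rpow (norm_nonneg _) hp0]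
      exact (L.le_opNorm g).trans (by
        calc ‖L‖ * ‖g‖ ≤ 1 * 1 := mul_le_mul hL hg1 (norm_nonneg _) zero_le_one
        _ = 1 := one_mul 1)
    have := le_weakNorm hp hq (fun _ : Fin 1 => x) _ hmu
    rwa [Fin.sum_univ_one, hgx, RCLike.norm_ofReal, abs_of_nonneg (norm_nonneg _),
      rpow_od_rpow (norm_nonneg _) hq0] at this

end E

section Perm
variable {F : Type*} [NormedAddCommGroup F] [NormedSpace ℂ F] {n : ℕ}

lemma muP_comp_perm (σ : Equiv.Perm (Fin n)) (y : Fin n → F) :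
    muP p (y ∘ σ) = muP p y := by
  unfold muP
  congr 1
  ext r
  simp only [Set.mem_setOf_eq, Function.comp_apply]
  constructor
  · rintro ⟨L, hL, rfl⟩
    exact ⟨L, hL, by rw [← Equiv.sum_comp σ (fun i => ‖L (y i)‖ ^ p)]⟩
  · rintro ⟨L, hL, rfl⟩
    exact ⟨L, hL, by rw [Equiv.sum_comp σ (fun i => ‖L (y i)‖ ^ p)]⟩

lemma muP_castSucc_le (hp : 1 ≤ p) (l : Fin (n+1) → F) :
    muP p (l ∘ Fin.castSucc) ≤ muP p l := by
  refine muP_le hp _ fun L hL => ?_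
  refine le_trans (Real.rpow_le_rpow (by positivity) ?_ (by positivity)) (le_muP hp l L hL)
  rw [Fin.sum_univ_castSucc (f := fun i => ‖L (l i)‖ ^ p)]
  exact le_add_of_nonneg_right (by positivity)

lemma muP_snoc_zero (hp0 : p ≠ 0) (l : Fin n → F) :
    muP p (Fin.snoc l (0 : F)) = muP p l := by
  have key : ∀ L : StrongDual ℂ F,
      ∑ i, ‖L ((Fin.snoc l (0 : F) : Fin (n+1) → F) i)‖ ^ p = ∑ i, ‖L (l i)‖ ^ p := by
    intro L
    rw [Fin.sum_univ_castSucc (f := fun i => ‖L ((Fin.snoc l (0:F) : Fin (n+1) → F) i)‖ ^ p)]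
    simp [Fin.snoc_castSucc, Fin.snoc_last, Real.zero_rpow hp0]
  unfold muP
  congr 1
  ext r
  simp only [Set.mem_setOf_eq]
  constructor
  · rintro ⟨L, hL, rfl⟩
    exact ⟨L, hL, by rw [key]⟩
  · rintro ⟨L, hL, rfl⟩
    exact ⟨L, hL, by rw [← key]⟩

end Perm

section E2
variable {E : Type*} [NormedAddCommGroup E] [NormedSpace ℂ E] {n : ℕ}

lemma weakNorm_comp_perm_le (hp : 1 ≤ p) (hq : 1 ≤ q) (σ : Equiv.Perm (Fin n))
    (x : Fin n → E) : weakNorm p q (x ∘ σ) ≤ weakNorm p q x := by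
  refine weakNorm_le hp hq _ fun l hl => ?_
  have hmu : muP p (l ∘ σ.symm) ≤ 1 := by
    rw [muP_comp_perm σ.symm l]; exact hl
  have hsum : ∑ i, ‖(l ∘ σ.symm) i (x i)‖ ^ q = ∑ i, ‖(l i) ((x ∘ σ) i)‖ ^ q := by
    rw [← Equiv.sum_comp σ (fun i => ‖(l ∘ σ.symm) i (x i)‖ ^ q)]
    refine Finset.sum_congr rfl fun i _ => ?_
    simp [Equiv.symm_apply_apply]
  have := le_weakNorm hp hq x (l ∘ σ.symm) hmu
  rwa [hsum] at this

lemma weakNorm_comp_perm (hp : 1 ≤ p) (hq : 1 ≤ q) (σ : Equiv.Perm (Fin n))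
    (x : Fin n → E) : weakNorm p q (x ∘ σ) = weakNorm p q x := by
  refine le_antisymm (weakNorm_comp_perm_le hp hq σ x) ?_
  have h := weakNorm_comp_perm_le hp hq σ.symm (x ∘ σ)
  have hx : (x ∘ σ) ∘ σ.symm = x := by
    funext i; simp
  rwa [hx] at h

lemma weakNorm_scale_le (hp : 1 ≤ p) (hq : 1 ≤ q) (α : Fin (n+1) → ℂ)
    (x : Fin (n+1) → E) :
    weakNorm p q (fun i => α i • x i) ≤ (⨆ i, ‖α i‖) * weakNorm p q x := by
  have hq0 : q ≠ 0 := by linarith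
  set M := ⨆ i, ‖α i‖ with hM
  have hbdd : BddAbove (Set.range fun i => ‖α i‖) := Set.Finite.bddAbove (Set.finite_range _)
  have hαM : ∀ i, ‖α i‖ ≤ M := fun i => le_ciSup hbdd i
  have hM0 : 0 ≤ M := (norm_nonneg (α 0)).trans (hαM 0)
  refine weakNorm_le hp hq _ fun l hl => ?_
  have h1 : ∀ i : Fin (n+1), ‖(l i) (α i • x i)‖ ^ q ≤ M ^ q * ‖(l i) (x i)‖ ^ q := by
    intro i
    rw [_root_.map_smul, smul_eq_mul, norm_mul, ← Real.mul_rpow hM0 (norm_nonneg _)]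
    refine Real.rpow_le_rpow (by positivity) ?_ (by linarith)
    exact mul_le_mul_of_nonneg_right (hαM i) (norm_nonneg _)
  calc (∑ i, ‖(l i) (α i • x i)‖ ^ q) ^ (1/q)
      ≤ (∑ i, M ^ q * ‖(l i) (x i)‖ ^ q) ^ (1/q) := by
        exact Real.rpow_le_rpow (by positivity) (Finset.sum_le_sum fun i _ => h1 i) (by positivity)
    _ = M * (∑ i, ‖(l i) (x i)‖ ^ q) ^ (1/q) := by
        rw [← Finset.mul_sum, Real.mul_rpow (by positivity) (by positivity),
          rpow_od_rpow hM0 hq0]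
    _ ≤ M * weakNorm p q x := mul_le_mul_of_nonneg_left (le_weakNorm hp hq x l hl) hM0

lemma weakNorm_snoc_zero (hp : 1 ≤ p) (hq : 1 ≤ q) (x : Fin (n+1) → E) :
    weakNorm p q (Fin.snoc x (0 : E)) = weakNorm p q x := by
  have hq0 : q ≠ 0 := by linarith
  refine le_antisymm ?_ ?_
  · refine weakNorm_le hp hq _ fun l hl => ?_
    have hsum : ∑ i, ‖(l i) ((Fin.snoc x (0:E) : Fin (n+2) → E) i)‖ ^ q
        = ∑ i, ‖((l ∘ Fin.castSucc) i) (x i)‖ ^ q := by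
      rw [Fin.sum_univ_castSucc (f := fun i => ‖(l i) ((Fin.snoc x (0:E) : Fin (n+2) → E) i)‖ ^ q)]
      simp [Fin.snoc_castSucc, Fin.snoc_last, Real.zero_rpow hq0]
    rw [hsum]
    exact le_weakNorm hp hq x _ ((muP_castSucc_le hp l).trans hl)
  · refine weakNorm_le hp hq _ fun l hl => ?_
    have hmu : muP p (Fin.snoc l (0 : StrongDual ℂ E)) ≤ 1 := by
      rw [muP_snoc_zero (by linarith : p ≠ 0)]; exact hl
    have hsum : ∑ i, ‖((Fin.snoc l 0 : Fin (n+2) → StrongDual ℂ E) i)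
          ((Fin.snoc x (0:E) : Fin (n+2) → E) i)‖ ^ q
        = ∑ i, ‖(l i) (x i)‖ ^ q := by
      rw [Fin.sum_univ_castSucc
        (f := fun i => ‖((Fin.snoc l 0 : Fin (n+2) → StrongDual ℂ E) i)
          ((Fin.snoc x (0:E) : Fin (n+2) → E) i)‖ ^ q)]
      simp [Fin.snoc_castSucc, Fin.snoc_last, Real.zero_rpow hq0]
    have := le_weakNorm hp hq (Fin.snoc x (0:E)) _ hmu
    rwa [hsum] at this

end E2

section Weights

variable {p q : ℝ}

lemma rpow_add_rpow_le_real {α β : ℝ} (hα : 0 ≤ α) (hβ : 0 ≤ β) (hp : 0 < p) (hpq : p ≤ q) :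
    (α ^ q + β ^ q) ^ (1/q) ≤ (α ^ p + β ^ p) ^ (1/p) := by
  lift α to ℝ≥0 using hα
  lift β to ℝ≥0 using hβ
  have := NNReal.rpow_add_rpow_le α β hp hpq
  exact_mod_cast this

lemma exists_phase (w : ℂ) : ∃ κ : ℂ, ‖κ‖ = 1 ∧ κ * w = (‖w‖ : ℂ) := by
  rcases eq_or_ne w 0 with rfl | h
  · exact ⟨1, by simp, by simp⟩
  · refine ⟨(‖w‖ : ℂ) / w, ?_, ?_⟩
    · rw [norm_div, Complex.norm_real, Real.norm_eq_abs, abs_of_nonneg (norm_nonneg _),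
        div_self (norm_ne_zero_iff.mpr h)]
    · field_simp

lemma exists_weights (hp : 1 ≤ p) (hpq : p ≤ q) {u v : ℝ} (hu : 0 ≤ u) (hv : 0 ≤ v)
    (hS : 0 < u ^ q + v ^ q) :
    ∃ s t : ℝ, 0 ≤ s ∧ 0 ≤ t ∧ (u ^ q + v ^ q) ^ (1/q) ≤ s * u + t * v ∧
      ∀ α β : ℝ, 0 ≤ α → 0 ≤ β → s * α + t * β ≤ (α ^ p + β ^ p) ^ (1/p) := by
  have hq : 1 ≤ q := hp.trans hpq
  have hq0 : q ≠ 0 := by linarith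
  rcases eq_or_lt_of_le hq with hq1 | hq1
  · -- q = 1, hence p = 1
    have hp1 : p = 1 := le_antisymm (hpq.trans hq1.symm.le) hp
    refine ⟨1, 1, zero_le_one, zero_le_one, ?_, ?_⟩
    · rw [← hq1]
      simp [Real.rpow_one]
    · intro α β hα hβ
      rw [hp1]
      simp [Real.rpow_one]
  · -- 1 < q
    set S := u ^ q + v ^ q with hSdef
    have hq1' : q - 1 ≠ 0 := by linarith
    set D := S ^ ((q-1)/q) with hDdef
    have hD : 0 < D := Real.rpow_pos_of_pos hS _
    refine ⟨u ^ (q-1) / D, v ^ (q-1) / D, by positivity, by positivity, ?_, ?_⟩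
    · have hw : ∀ w : ℝ, 0 ≤ w → w ^ (q-1) * w = w ^ q := by
        intro w hw0
        rcases hw0.eq_or_lt with rfl | h
        · rw [Real.zero_rpow hq1', Real.zero_rpow hq0, zero_mul]
        · nth_rewrite 2 [← Real.rpow_one w]
          rw [← Real.rpow_add h, sub_add_cancel]
      have hSD : S ^ (1/q) = S / D := by
        rw [eq_div_iff hD.ne', hDdef, ← Real.rpow_add hS]
        rw [show 1/q + (q-1)/q = 1 by field_simp; ring, Real.rpow_one]
      rw [div_mul_eq_mul_div, div_mul_eq_mul_div, ← add_div, hw u hu, hw v hv,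
        ← hSdef, hSD]
    · intro α β hα hβ
      set q' := q.conjExponent with hq'def
      have hcj : q.HolderConjugate q' := Real.HolderConjugate.conjExponent hq1
      have hcj' : q'.HolderConjugate q := hcj.symm
      have holder := Real.inner_le_Lp_mul_Lq (s := Finset.univ)
        (![u ^ (q-1) / D, v ^ (q-1) / D]) (![α, β]) hcj'
      simp only [Fin.sum_univ_two, Matrix.cons_val_zero, Matrix.cons_val_one,
        Matrix.head_cons] at holder
      have hnorm1 : (|u ^ (q-1) / D| ^ q' + |v ^ (q-1) / D| ^ q') ^ (1/q') = 1 := by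
        have hqq' : (q-1) * q' = q := by
          rw [hq'def, Real.conjExponent]
          field_simp
        have hDq' : D ^ q' = S := by
          rw [hDdef, ← Real.rpow_mul hS.le]
          rw [show (q-1)/q * q' = 1 by rw [hq'def, Real.conjExponent]; field_simp,
            Real.rpow_one]
        have hs' : |u ^ (q-1) / D| ^ q' = u ^ q / S := by
          rw [abs_of_nonneg (by positivity), Real.div_rpow (by positivity) hD.le, hDq',
            ← Real.rpow_mul hu, hqq']
        have ht' : |v ^ (q-1) / D| ^ q' = v ^ q / S := by
          rw [abs_of_nonneg (by positivity), Real.div_rpow (by positivity) hD.le, hDq',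
            ← Real.rpow_mul hv, hqq']
        rw [hs', ht', ← add_div, ← hSdef, div_self hS.ne', Real.one_rpow]
      rw [hnorm1, one_mul, abs_of_nonneg hα, abs_of_nonneg hβ] at holder
      exact holder.trans (rpow_add_rpow_le_real hα hβ (by linarith) hpq)

end Weights

section A4
variable {E : Type*} [NormedAddCommGroup E] [NormedSpace ℂ E] {n : ℕ} {p q : ℝ}

lemma exists_combined (hp : 1 ≤ p) (hpq : p ≤ q) (a b : StrongDual ℂ E) (z : E)
    (hS : 0 < ‖a z‖ ^ q + ‖b z‖ ^ q) :
    ∃ c : StrongDual ℂ E,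
      (‖a z‖ ^ q + ‖b z‖ ^ q ≤ ‖c z‖ ^ q) ∧
      ∀ L : StrongDual ℂ (StrongDual ℂ E), ‖L‖ ≤ 1 →
        ‖L c‖ ^ p ≤ ‖L a‖ ^ p + ‖L b‖ ^ p := by
  have hq : 1 ≤ q := hp.trans hpq
  have hq0 : q ≠ 0 := by linarith
  have hp0 : p ≠ 0 := by linarith
  obtain ⟨s, t, hs, ht, hK1, hK2⟩ :=
    exists_weights hp hpq (norm_nonneg (a z)) (norm_nonneg (b z)) hS
  obtain ⟨κa, hκa, hκaw⟩ := exists_phase (a z)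
  obtain ⟨κb, hκb, hκbw⟩ := exists_phase (b z)
  refine ⟨((s : ℂ) * κa) • a + ((t : ℂ) * κb) • b, ?_, ?_⟩
  · have hcz : (((s : ℂ) * κa) • a + ((t : ℂ) * κb) • b) z
        = ((s * ‖a z‖ + t * ‖b z‖ : ℝ) : ℂ) := by
      simp only [ContinuousLinearMap.add_apply, ContinuousLinearMap.smul_apply, smul_eq_mul]
      rw [mul_assoc, hκaw, mul_assoc, hκbw]
      push_cast
      ring
    rw [hcz, Complex.norm_real, Real.norm_eq_abs, abs_of_nonneg (by positivity)]
    have h6 := Real.rpow_le_rpow (by positivity) hK1 (by linarith : (0:ℝ) ≤ q)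
    rwa [rpow_rpow_od (by positivity) hq0] at h6
  · intro L hL
    have h3 : ‖L (((s : ℂ) * κa) • a + ((t : ℂ) * κb) • b)‖ ≤ s * ‖L a‖ + t * ‖L b‖ := by
      have hLc2 : L (((s : ℂ) * κa) • a + ((t : ℂ) * κb) • b)
          = ((s:ℂ) * κa) * L a + ((t:ℂ) * κb) * L b := by
        simp [map_add, _root_.map_smul, smul_eq_mul]
      rw [hLc2]
      refine (norm_add_le _ _).trans (le_of_eq ?_)
      rw [norm_mul, norm_mul, norm_mul, norm_mul, hκa, hκb, Complex.norm_real,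
        Complex.norm_real, Real.norm_eq_abs, Real.norm_eq_abs, abs_of_nonneg hs,
        abs_of_nonneg ht]
      ring
    have h4 := h3.trans (hK2 _ _ (norm_nonneg _) (norm_nonneg _))
    have h5 := Real.rpow_le_rpow (norm_nonneg _) h4 (by linarith : (0:ℝ) ≤ p)
    rwa [rpow_rpow_od (by positivity) hp0] at h5

set_option maxHeartbeats 1000000 in
lemma weakNorm_snoc_last (hp : 1 ≤ p) (hpq : p ≤ q) (x : Fin (n+1) → E) :
    weakNorm p q (Fin.snoc x (x (Fin.last n))) = weakNorm p q x := by
  have hq : 1 ≤ q := hp.trans hpq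
  have hq0 : q ≠ 0 := by linarith
  have hp0 : p ≠ 0 := by linarith
  refine le_antisymm ?_ ?_
  · -- hard direction
    refine weakNorm_le hp hq _ fun l' hl' => ?_
    obtain ⟨z, hz⟩ : ∃ z, z = x (Fin.last n) := ⟨_, rfl⟩
    obtain ⟨a, ha⟩ : ∃ a, a = l' ((Fin.last n).castSucc) := ⟨_, rfl⟩
    obtain ⟨b, hb⟩ : ∃ b, b = l' (Fin.last (n+1)) := ⟨_, rfl⟩
    obtain ⟨T, hT⟩ : ∃ T, T = ∑ i : Fin n, ‖(l' (i.castSucc.castSucc)) (x i.castSucc)‖ ^ q :=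
      ⟨_, rfl⟩
    have hT0 : 0 ≤ T := by
      rw [hT]; exact Finset.sum_nonneg fun i _ => Real.rpow_nonneg (norm_nonneg _) q
    have hsum : ∑ i, ‖(l' i) ((Fin.snoc x (x (Fin.last n)) : Fin (n+2) → E) i)‖ ^ q
        = T + ‖a z‖ ^ q + ‖b z‖ ^ q := by
      rw [hT, ha, hb, hz]
      simp [Fin.sum_univ_castSucc, Fin.snoc_castSucc, Fin.snoc_last]
    have hA := Real.rpow_nonneg (norm_nonneg (a z)) q
    have hB := Real.rpow_nonneg (norm_nonneg (b z)) q
    rcases eq_or_lt_of_le (by positivity : (0:ℝ) ≤ ‖a z‖ ^ q + ‖b z‖ ^ q) with hS | hS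
    · -- degenerate case
      have hu : ‖a z‖ ^ q = 0 := le_antisymm (by linarith) hA
      have hv : ‖b z‖ ^ q = 0 := le_antisymm (by linarith) hB
      have hmu : muP p (l' ∘ Fin.castSucc) ≤ 1 := (muP_castSucc_le hp l').trans hl'
      refine le_trans ?_ (le_weakNorm hp hq x _ hmu)
      refine Real.rpow_le_rpow
        (Finset.sum_nonneg fun i _ => Real.rpow_nonneg (norm_nonneg _) q) ?_ (by positivity)
      rw [hsum]
      have hrhs : ∑ i, ‖((l' ∘ Fin.castSucc) i) (x i)‖ ^ q = T + ‖a z‖ ^ q := by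
        rw [hT, ha, hz]
        simp [Fin.sum_univ_castSucc]
      rw [hrhs]
      linarith
    · -- main case
      obtain ⟨c, hcq, hcL⟩ := exists_combined hp hpq a b z hS
      obtain ⟨l, hldef⟩ : ∃ l, l =
          (Fin.snoc (fun i : Fin n => l' (i.castSucc.castSucc)) c :
            Fin (n+1) → StrongDual ℂ E) := ⟨_, rfl⟩
      have hmu : muP p l ≤ 1 := by
        refine muP_le hp _ fun L hL => ?_
        have hbase : ∑ i, ‖L (l' i)‖ ^ p ≤ 1 := by
          have h1 := (le_muP hp l' L hL).trans hl'
          have hnn : (0:ℝ) ≤ ∑ i, ‖L (l' i)‖ ^ p :=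
            Finset.sum_nonneg fun i _ => Real.rpow_nonneg (norm_nonneg _) p
          have h2 := Real.rpow_le_rpow (Real.rpow_nonneg hnn _) h1 (by linarith : (0:ℝ) ≤ p)
          rwa [rpow_rpow_od hnn hp0, Real.one_rpow] at h2
        have hsplit : ∑ i, ‖L (l' i)‖ ^ p
            = (∑ i : Fin n, ‖L (l' (i.castSucc.castSucc))‖ ^ p) + ‖L a‖ ^ p + ‖L b‖ ^ p := by
          rw [ha, hb]
          simp [Fin.sum_univ_castSucc]
        have hlsum : ∑ i, ‖L (l i)‖ ^ p
            = (∑ i : Fin n, ‖L (l' (i.castSucc.castSucc))‖ ^ p) + ‖L c‖ ^ p := by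
          rw [hldef]
          simp [Fin.sum_univ_castSucc, Fin.snoc_castSucc, Fin.snoc_last]
        have hfin : ∑ i, ‖L (l i)‖ ^ p ≤ 1 := by
          rw [hlsum]
          rw [hsplit] at hbase
          have := hcL L hL
          linarith
        have hnn2 : (0:ℝ) ≤ ∑ i, ‖L (l i)‖ ^ p :=
          Finset.sum_nonneg fun i _ => Real.rpow_nonneg (norm_nonneg _) p
        calc (∑ i, ‖L (l i)‖ ^ p) ^ (1/p) ≤ 1 ^ (1/p) :=
              Real.rpow_le_rpow hnn2 hfin (by positivity)
          _ = 1 := Real.one_rpow _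
      have hlx : ∑ i, ‖(l i) (x i)‖ ^ q = T + ‖c z‖ ^ q := by
        rw [hldef, hT, hz]
        simp [Fin.sum_univ_castSucc, Fin.snoc_castSucc, Fin.snoc_last]
      refine le_trans ?_ (le_weakNorm hp hq x l hmu)
      refine Real.rpow_le_rpow
        (Finset.sum_nonneg fun i _ => Real.rpow_nonneg (norm_nonneg _) q) ?_ (by positivity)
      rw [hsum, hlx]
      linarith
  · -- easy direction
    refine weakNorm_le hp hq _ fun l hl => ?_
    have hmu : muP p (Fin.snoc l (0 : StrongDual ℂ E)) ≤ 1 := by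
      rw [muP_snoc_zero hp0]; exact hl
    have hsum : ∑ i, ‖((Fin.snoc l 0 : Fin (n+2) → StrongDual ℂ E) i)
          ((Fin.snoc x (x (Fin.last n)) : Fin (n+2) → E) i)‖ ^ q
        = ∑ i, ‖(l i) (x i)‖ ^ q := by
      simp [Fin.sum_univ_castSucc, Fin.snoc_castSucc, Fin.snoc_last, Real.zero_rpow hq0]
    have h7 := le_weakNorm hp hq (Fin.snoc x (x (Fin.last n))) _ hmu
    rwa [hsum] at h7

end A4
end WeakAux

/-- for `1 ≤ p ≤ q < ∞`, the family of weak `(p,q)`-multi-norms is a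
multi-norm over `E`: each level is a norm on `E^n`, level `1` is the norm of `E`, and
axioms (A1)-(A4) hold. -/
theorem stmt1 (p q : ℝ) (hp : 1 ≤ p) (hpq : p ≤ q)
    (E : Type*) [NormedAddCommGroup E] [NormedSpace ℂ E] [CompleteSpace E] :
    -- each `‖·‖_n^{(p,q)}` is a norm on `E^n`:
    (∀ (n : ℕ) (x : Fin n → E), weakNorm p q x = 0 ↔ x = 0) ∧
    (∀ (n : ℕ) (x y : Fin n → E), weakNorm p q (x + y) ≤ weakNorm p q x + weakNorm p q y) ∧
    (∀ (n : ℕ) (c : ℂ) (x : Fin n → E), weakNorm p q (c • x) = ‖c‖ * weakNorm p q x) ∧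
    -- `‖·‖_1^{(p,q)}` is the norm of `E`:
    (∀ x : E, weakNorm p q (fun _ : Fin 1 => x) = ‖x‖) ∧
    -- (A1):
    (∀ (n : ℕ) (σ : Equiv.Perm (Fin n)) (x : Fin n → E),
      weakNorm p q (x ∘ σ) = weakNorm p q x) ∧
    -- (A2):
    (∀ (n : ℕ) (α : Fin (n + 1) → ℂ) (x : Fin (n + 1) → E),
      weakNorm p q (fun i => α i • x i) ≤ (⨆ i, ‖α i‖) * weakNorm p q x) ∧
    -- (A3):
    (∀ (n : ℕ) (x : Fin (n + 1) → E),
      weakNorm p q (Fin.snoc x (0 : E)) = weakNorm p q x) ∧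
    -- (A4):
    (∀ (n : ℕ) (x : Fin (n + 1) → E),
      weakNorm p q (Fin.snoc x (x (Fin.last n))) = weakNorm p q x) := by
  have hq : 1 ≤ q := hp.trans hpq
  exact ⟨fun n x => WeakAux.weakNorm_eq_zero_iff hp hq x,
    fun n x y => WeakAux.weakNorm_add_le hp hq x y,
    fun n c x => WeakAux.weakNorm_smul hp hq c x,
    fun x => WeakAux.weakNorm_one hp hq x,
    fun n σ x => WeakAux.weakNorm_comp_perm hp hq σ x,
    fun n α x => WeakAux.weakNorm_scale_le hp hq α x,
    fun n x => WeakAux.weakNorm_snoc_zero hp hq x,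
    fun n x => WeakAux.weakNorm_snoc_last hp hpq x⟩
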